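/- Let T be a finite tree with exactly k leaves, where k ≥ 3. Then there is a nonempty proper subset A of the vertex set of T such that the subgraph of T induced by A is a path and the subgraph of T induced by the complement of A is a tree with exactly k − 1 leaves. -/

import Mathlib

open SimpleGraph

/-- Number of leaves (degree-one vertices) of a graph. -/
noncomputable def leafCount {V : Type} (T : SimpleGraph V) : ℕ :=
  Set.ncard {v | (T.neighborSet v).ncard = 1}

/-- A graph is a path graph if its vertices can be listed (each exactly once) so
that two vertices are adjacent iff they are consecutive in the list. -/
def IsPathGraph {W : Type} (H : SimpleGraph W) : Prop :=
  ∃ l : List W, l.Nodup ∧ (∀ x : W, x ∈ l) ∧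
    ∀ x y : W, H.Adj x y ↔ ([x, y] <:+: l ∨ [y, x] <:+: l)

open List

private lemma chain'_of_infix {α : Type} {R : α → α → Prop} {l : List α} (h : l.Chain' R)
    {x y : α} (hxy : [x, y] <:+: l) : R x y := by
  have := h.infix hxy
  exact (List.isChain_cons_cons.mp this).1

/-- crossing lemma. -/
private lemma crossing {α : Type} (S : Set α) (R : α → α → Prop) :
    ∀ (l : List α), l.Chain' R → ∀ (hne : l ≠ []), l.head hne ∉ S →
      ∀ x ∈ l, x ∈ S →
      ∃ u u', R u u' ∧ u ∉ S ∧ u' ∈ S ∧ u ∈ l ∧ u' ∈ l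
  | [], _, hne, _, _, _, _ => absurd rfl hne
  | [a], hc, hne, hh, x, hx, hxS => by
      simp only [List.mem_singleton] at hx
      subst hx
      exact absurd hxS hh
  | a :: b :: t, hc, hne, hh, x, hx, hxS => by
      obtain ⟨hab, hc'⟩ := List.isChain_cons_cons.mp hc
      by_cases hb : b ∈ S
      · exact ⟨a, b, hab, hh, hb, by simp, by simp⟩
      · have hx' : x ∈ b :: t := by
          rcases hx with _ | hx
          · exact absurd hxS hh
          · assumption
        obtain ⟨u, u', h1, h2, h3, h4, h5⟩ :=
          crossing S R (b :: t) hc' (by simp) hb x hx' hxS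
        exact ⟨u, u', h1, h2, h3, List.mem_cons_of_mem _ h4, List.mem_cons_of_mem _ h5⟩

/-- A walk whose support lies in S gives reachability in the induced graph. -/
private lemma reach_induce {V : Type} {T : SimpleGraph V} {S : Set V} :
    ∀ {x y : V} (p : T.Walk x y) (hs : ∀ z ∈ p.support, z ∈ S),
      (T.induce S).Reachable ⟨x, hs x p.start_mem_support⟩ ⟨y, hs y p.end_mem_support⟩
  | x, _, SimpleGraph.Walk.nil, hs => Reachable.refl _
  | x, y, SimpleGraph.Walk.cons h q, hs => by
      have hs' : ∀ z ∈ q.support, z ∈ S := fun z hz => hs z (by simp [hz])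
      have h1 : (T.induce S).Adj ⟨x, hs x (by simp)⟩ ⟨_, hs' _ q.start_mem_support⟩ := h
      exact (h1.reachable).trans (reach_induce q hs')

private lemma acyclic_induce {V : Type} {T : SimpleGraph V} (h : T.IsAcyclic) (S : Set V) :
    (T.induce S).IsAcyclic := by
  intro v c hc
  exact h (c.map (Embedding.induce (G := T) S).toHom)
    (hc.map (Embedding.induce (G := T) S).injective)

private lemma getElem_idx_congr {α : Type} {l : List α} {i j : ℕ} (h : i = j)
    (hi : i < l.length) : l[i] = l[j]'(h ▸ hi) := by subst h; rfl

private lemma infix_of_getElem {α : Type} {l : List α} {i : ℕ} (h2 : i + 1 < l.length) :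
    [l[i]'(by omega), l[i+1]] <:+: l := by
  have hd : l.drop i = l[i]'(by omega) :: l[i+1] :: l.drop (i+2) := by
    rw [List.drop_eq_getElem_cons (by omega), List.drop_eq_getElem_cons h2]
  have hpre : [l[i]'(by omega), l[i+1]] <+: l.drop i := by
    rw [hd]; exact ⟨l.drop (i+2), rfl⟩
  exact hpre.isInfix.trans (l.drop_suffix i).isInfix

private lemma getElem_of_infix {α : Type} {l : List α} {x y : α} (h : [x, y] <:+: l) :
    ∃ (i : ℕ) (h2 : i + 1 < l.length), l[i]'(by omega) = x ∧ l[i+1] = y := by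
  obtain ⟨s, t, hst⟩ := h
  have hst' : l = s ++ x :: y :: t := by
    rw [← hst]; simp
  subst hst'
  refine ⟨s.length, by simp [List.length_append], ?_, ?_⟩
  · rw [List.getElem_append_right (le_refl _)]
    simp
  · rw [List.getElem_append_right (by omega)]
    simp

private lemma getElem_mem_take_iff {α : Type} {l : List α} (hn : l.Nodup) {m i : ℕ}
    (hi : i < l.length) : l[i] ∈ l.take m ↔ i < m := by
  constructor
  · intro h
    obtain ⟨j, hj, hji⟩ := List.getElem_of_mem h
    rw [List.length_take] at hj
    rw [List.getElem_take] at hji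
    have : j = i := by
      have hinj := List.nodup_iff_injective_get.mp hn
      have h2 := hinj (a₁ := ⟨j, by omega⟩) (a₂ := ⟨i, hi⟩) (by simpa using hji)
      simpa using congrArg Fin.val h2
    omega
  · intro h
    have h3 : (l.take m)[i]'(by rw [List.length_take]; omega) = l[i] := List.getElem_take ..
    rw [← h3]
    exact List.getElem_mem _

private lemma adj_consec_aux {V : Type} [DecidableEq V] {T : SimpleGraph V}
    (hac : T.IsAcyclic) {u w : V} (p : T.Walk u w) (hp : p.IsPath) {x y : V}
    (hx : x ∈ p.support) (hy : y ∈ (p.dropUntil x hx).support) (hadj : T.Adj x y) :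
    [x, y] <:+: p.support := by
  set q := p.dropUntil x hx with hq
  have hqp : q.IsPath := hp.dropUntil hx
  set r := q.takeUntil y hy with hr
  have hrp : r.IsPath := hqp.takeUntil hy
  have hone : r = Walk.cons hadj Walk.nil := by
    have h2 : (Walk.cons hadj Walk.nil : T.Walk x y).IsPath := by
      simp [hadj.ne]
    have := hac.path_unique ⟨r, hrp⟩ ⟨Walk.cons hadj Walk.nil, h2⟩
    exact congrArg Subtype.val this
  have hsupr : r.support = [x, y] := by rw [hone]; simp
  have hq2 : q.support = [x, y] ++ (q.dropUntil y hy).support.tail := by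
    conv_lhs => rw [← q.take_spec hy]
    rw [Walk.support_append, hsupr]
  have hp2 : p.support = (p.takeUntil x hx).support ++ q.support.tail := by
    conv_lhs => rw [← p.take_spec hx]
    rw [Walk.support_append]
  have hne : (p.takeUntil x hx).support ≠ [] := Walk.support_ne_nil _
  have hlast : (p.takeUntil x hx).support.getLast hne = x := Walk.getLast_support _
  have hsplit : (p.takeUntil x hx).support
      = (p.takeUntil x hx).support.dropLast ++ [x] := by
    conv_lhs => rw [← List.dropLast_append_getLast hne]
    rw [hlast]
  refine ⟨(p.takeUntil x hx).support.dropLast, (q.dropUntil y hy).support.tail, ?_⟩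
  rw [hp2, hsplit, hq2]
  simp
  conv_rhs => rw [hsplit]
  simp only [List.append_assoc, List.singleton_append]

private lemma adj_consec {V : Type} [DecidableEq V] {T : SimpleGraph V}
    (hac : T.IsAcyclic) {u w : V} (p : T.Walk u w) (hp : p.IsPath) {x y : V}
    (hx : x ∈ p.support) (hy : y ∈ p.support) (hadj : T.Adj x y) :
    [x, y] <:+: p.support ∨ [y, x] <:+: p.support := by
  by_cases hcase : y ∈ (p.dropUntil x hx).support
  · exact Or.inl (adj_consec_aux hac p hp hx hcase hadj)
  · have hy' : y ∈ (p.takeUntil x hx).support := by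
      have := hy
      rw [← p.take_spec hx, Walk.mem_support_append_iff] at this
      tauto
    have hx' : x ∈ ((p.takeUntil x hx).dropUntil y hy').support := by
      exact Walk.end_mem_support _
    have h := adj_consec_aux hac (p.takeUntil x hx) (hp.takeUntil hx) hy' hx' hadj.symm
    right
    refine h.trans ?_
    have : p.support = (p.takeUntil x hx).support ++ (p.dropUntil x hx).support.tail := by
      conv_lhs => rw [← p.take_spec hx]
      rw [Walk.support_append]
    rw [this]
    exact (List.prefix_append _ _).isInfix


private lemma ncard_neighborSet_eq_degree {V : Type} [Fintype V] (T : SimpleGraph V)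
    [DecidableRel T.Adj] (v : V) : (T.neighborSet v).ncard = T.degree v := by
  rw [Set.ncard_eq_toFinset_card']
  simp [SimpleGraph.degree, SimpleGraph.neighborFinset]

private lemma exists_branch {V : Type} [Fintype V] (T : SimpleGraph V) (htree : T.IsTree)
    {k : ℕ} (hleaf : leafCount T = k) (hk : 3 ≤ k) :
    ∃ b : V, 3 ≤ (T.neighborSet b).ncard := by
  classical
  by_contra hcon
  push_neg at hcon
  set L := {v : V | (T.neighborSet v).ncard = 1} with hL
  have hLcard : L.toFinset.card = k := by
    rw [← Set.ncard_eq_toFinset_card']; exact hleaf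
  set n := Fintype.card V with hn
  have hkn : k ≤ n := by
    rw [← hLcard]; exact Finset.card_le_univ _
  have hsum : ∑ v, T.degree v = 2 * (n - 1) := by
    rw [SimpleGraph.sum_degrees_eq_twice_card_edges]
    have := htree.card_edgeFinset
    omega
  have hbound : ∑ v, T.degree v ≤ ∑ v, (if v ∈ L.toFinset then 1 else 2) := by
    apply Finset.sum_le_sum
    intro v _
    by_cases hv : v ∈ L.toFinset
    · rw [if_pos hv]
      rw [Set.mem_toFinset] at hv
      rw [← ncard_neighborSet_eq_degree]
      exact le_of_eq hv
    · rw [if_neg hv, ← ncard_neighborSet_eq_degree]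
      have := hcon v
      omega
  have hsum2 : ∑ v, (if v ∈ L.toFinset then 1 else 2) = k * 1 + (n - k) * 2 := by
    rw [Finset.sum_ite, Finset.sum_const, Finset.sum_const, smul_eq_mul, smul_eq_mul]
    have h1 : (Finset.univ.filter (· ∈ L.toFinset)).card = k := by
      rw [Finset.filter_univ_mem, hLcard]
    have h2 := Finset.card_filter_add_card_filter_not
      (s := (Finset.univ : Finset V)) (p := (· ∈ L.toFinset))
    rw [h1, Finset.card_univ] at h2
    rw [h1]
    have h3 : (Finset.univ.filter (fun v => ¬ v ∈ L.toFinset)).card = n - k := by omega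
    rw [h3]
  omega

theorem stmt_8 {V : Type} [Fintype V] (T : SimpleGraph V) (k : ℕ)
    (htree : T.IsTree) (hleaf : leafCount T = k) (hk : 3 ≤ k) :
    ∃ A : Set V, A.Nonempty ∧ A ≠ Set.univ ∧
      IsPathGraph (T.induce A) ∧
      (T.induce (Aᶜ)).IsTree ∧ leafCount (T.induce (Aᶜ)) = k - 1 := by
  classical
  have hconn := htree.isConnected
  have hac := htree.IsAcyclic
  obtain ⟨v, hvL⟩ : {u : V | (T.neighborSet u).ncard = 1}.Nonempty := by
    apply Set.nonempty_of_ncard_ne_zero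
    have : {u : V | (T.neighborSet u).ncard = 1}.ncard = k := hleaf
    omega
  have hvL' : (T.neighborSet v).ncard = 1 := hvL
  obtain ⟨b, hb3⟩ : ∃ b : V, 3 ≤ (T.neighborSet b).ncard := exists_branch T htree hleaf hk
  obtain ⟨p0⟩ := hconn.preconnected v b
  set p : T.Walk v b := (p0.toPath : T.Path v b).1 with hpdef
  have hp : p.IsPath := p0.toPath.2
  set l : List V := p.support with hldef
  have hlsup : l.length = p.support.length := rfl
  have hln : l.Nodup := hp.support_nodup
  have hchain : l.Chain' T.Adj := p.isChain_adj_support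
  set c : V → Bool := fun x => decide ((T.neighborSet x).ncard < 3) with hcdef
  set A0 : List V := l.takeWhile c with hA0def
  set rest : List V := l.dropWhile c with hrestdef
  have hsplit : A0 ++ rest = l := List.takeWhile_append_dropWhile
  have hA0deg : ∀ x ∈ A0, (T.neighborSet x).ncard < 3 := by
    intro x hx
    have := List.mem_takeWhile_imp hx
    simpa [hcdef] using this
  have hbl : b ∈ l := p.end_mem_support
  have hrest_ne : rest ≠ [] := by
    intro h
    have hlA0 : l = A0 := by rw [← hsplit, h, List.append_nil]
    have := hA0deg b (hlA0 ▸ hbl)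
    omega
  set w : V := rest.head hrest_ne with hwdef
  have hwdeg : 3 ≤ (T.neighborSet w).ncard := by
    have h1 : c (rest.head hrest_ne) = false := List.head_dropWhile_not c hrest_ne
    rw [← hwdef] at h1
    simp only [hcdef, decide_eq_false_iff_not] at h1
    omega
  have hwl : w ∈ l := by
    rw [← hsplit]
    exact List.mem_append_right _ (List.head_mem hrest_ne)
  have hheadl : l.head (Walk.support_ne_nil p) = v := Walk.head_support p
  have hA0ne : A0 ≠ [] := by
    intro h
    have hlrest : l = rest := by rw [← hsplit, h, List.nil_append]
    have : w = v := by
      rw [hwdef]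
      have : rest.head hrest_ne = l.head (Walk.support_ne_nil p) := by
        congr 1
        exact hlrest.symm
      rw [this, hheadl]
    rw [this] at hwdeg
    omega
  set m : ℕ := A0.length with hmdef
  have hm : 0 < m := by
    rw [hmdef]
    exact List.length_pos_iff.mpr hA0ne
  have hA0take : A0 = l.take m := by
    rw [← hsplit, hmdef]
    exact (List.take_left (l₁ := A0) (l₂ := rest)).symm
  have hmlen : m < l.length := by
    rw [← hsplit, List.length_append]
    have := List.length_pos_iff.mpr hrest_ne
    omega
  have hget0 : l[0]'(by omega) = v := by
    exact (List.getElem_zero _).trans hheadl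
  have hmemA0_iff : ∀ i (h : i < l.length), l[i] ∈ A0 ↔ i < m := by
    intro i h
    rw [hA0take]
    exact getElem_mem_take_iff hln h
  have hvA0 : v ∈ A0 := by
    rw [← hget0]
    exact (hmemA0_iff 0 (by omega)).mpr hm
  have hwA0 : w ∉ A0 := by
    have hdisj : A0.Disjoint rest := List.disjoint_of_nodup_append (hsplit ▸ hln)
    intro h
    exact hdisj h (List.head_mem hrest_ne)
  have hvw : v ≠ w := fun h => hwA0 (h ▸ hvA0)
  have hidx : ∀ i j (hi : i < l.length) (hj : j < l.length), l[i] = l[j] → i = j := by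
    intro i j hi hj h
    have hinj := List.nodup_iff_injective_get.mp hln
    have := hinj (a₁ := ⟨i, hi⟩) (a₂ := ⟨j, hj⟩) (by simpa using h)
    simpa using congrArg Fin.val this
  have hgetm : l[m]'hmlen = w := by
    rw [List.getElem_of_eq hsplit.symm hmlen, List.getElem_append_right (by omega)]
    simp only [hmdef, Nat.sub_self]
    exact List.getElem_zero _
  have hadjget : ∀ i (h : i + 1 < l.length), T.Adj (l[i]'(by omega)) (l[i+1]'h) := by
    intro i h
    have := List.isChain_iff_getElem.mp hchain i (by omega)
    simpa using this
  -- C1 : neighbors of interior vertices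
  have hC1 : ∀ i (hi : i < m) (y : V), y ∈ T.neighborSet (l[i]'(by omega)) →
      (y = l[i+1]'(by omega) ∨ (0 < i ∧ y = l[i-1]'(by omega))) := by
    intro i hi y hy
    rcases Nat.eq_zero_or_pos i with h0 | h0
    · subst h0
      left
      obtain ⟨a, ha⟩ := Set.ncard_eq_one.mp (hget0 ▸ hvL')
      have h1 : l[1]'(by omega) ∈ T.neighborSet (l[0]'(by omega)) :=
        hadjget 0 (by omega)
      rw [ha] at h1 hy
      rw [Set.mem_singleton_iff] at h1 hy
      rw [hy, h1]
    · obtain ⟨j, rfl⟩ : ∃ j, i = j + 1 := ⟨i - 1, by omega⟩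
      have hb1 : j + 1 < l.length := by omega
      have hb2 : j + 2 < l.length := by omega
      have hadj1 : T.Adj (l[j]'(by omega)) (l[j+1]'hb1) := hadjget j hb1
      have hadj2 : T.Adj (l[j+1]'hb1) (l[j+2]'hb2) := hadjget (j+1) hb2
      have hne : (l[j]'(by omega)) ≠ (l[j+2]'hb2) := by
        intro h
        have := hidx j (j+2) (by omega) hb2 h
        omega
      have hsub : {l[j]'(by omega), l[j+2]'hb2} ⊆ T.neighborSet (l[j+1]'hb1) := by
        intro z hz
        rcases hz with hz | hz
        · rw [hz]; exact hadj1.symm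
        · rw [Set.mem_singleton_iff] at hz
          rw [hz]; exact hadj2
      have hmemj1 : (l[j+1]'hb1) ∈ A0 := (hmemA0_iff (j+1) hb1).mpr hi
      have hcard : (T.neighborSet (l[j+1]'hb1)).ncard ≤ 2 := by
        have := hA0deg _ hmemj1
        omega
      have heq : {l[j]'(by omega), l[j+2]'hb2} = T.neighborSet (l[j+1]'hb1) := by
        apply Set.eq_of_subset_of_ncard_le hsub
        rw [Set.ncard_pair hne]
        exact hcard
      rw [← heq] at hy
      rcases hy with hy | hy
      · right
        exact ⟨by omega, by simpa using hy⟩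
      · left
        simpa using hy
  -- C2 : interior vertices have degree exactly 2
  have hC2 : ∀ i (hi : i < m), 0 < i → (T.neighborSet (l[i]'(by omega))).ncard = 2 := by
    intro i hi h0
    obtain ⟨j, rfl⟩ : ∃ j, i = j + 1 := ⟨i - 1, by omega⟩
    have hb1 : j + 1 < l.length := by omega
    have hb2 : j + 2 < l.length := by omega
    have hadj1 : T.Adj (l[j]'(by omega)) (l[j+1]'hb1) := hadjget j hb1
    have hadj2 : T.Adj (l[j+1]'hb1) (l[j+2]'hb2) := hadjget (j+1) hb2
    have hne : (l[j]'(by omega)) ≠ (l[j+2]'hb2) := by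
      intro h
      have := hidx j (j+2) (by omega) hb2 h
      omega
    have hsub : {l[j]'(by omega), l[j+2]'hb2} ⊆ T.neighborSet (l[j+1]'hb1) := by
      intro z hz
      rcases hz with hz | hz
      · rw [hz]; exact hadj1.symm
      · rw [Set.mem_singleton_iff] at hz
        rw [hz]; exact hadj2
    have hmemj1 : (l[j+1]'hb1) ∈ A0 := (hmemA0_iff (j+1) hb1).mpr hi
    have hcard : (T.neighborSet (l[j+1]'hb1)).ncard ≤ 2 := by
      have := hA0deg _ hmemj1
      omega
    have heq : {l[j]'(by omega), l[j+2]'hb2} = T.neighborSet (l[j+1]'hb1) := by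
      apply Set.eq_of_subset_of_ncard_le hsub
      rw [Set.ncard_pair hne]
      exact hcard
    rw [← heq, Set.ncard_pair hne]
  have hA0l : ∀ x ∈ A0, x ∈ l := fun x hx => hsplit ▸ List.mem_append_left _ hx
  have hfindidx : ∀ x ∈ A0, ∃ i, ∃ hi : i < m, l[i]'(lt_trans hi hmlen) = x := by
    intro x hx
    obtain ⟨i, hil, hix⟩ := List.getElem_of_mem (hA0l x hx)
    exact ⟨i, (hmemA0_iff i hil).mp (hix ▸ hx), hix⟩
  -- S1 : closure of A0
  have hS1 : ∀ x ∈ A0, ∀ y ∈ T.neighborSet x, y ∈ A0 ∨ y = w := by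
    intro x hx y hy
    obtain ⟨i, hi, rfl⟩ := hfindidx x hx
    rcases hC1 i hi y hy with h | ⟨h0, h⟩
    · rcases Nat.lt_or_ge (i+1) m with hlt | hge
      · exact Or.inl (h ▸ (hmemA0_iff (i+1) (by omega)).mpr hlt)
      · have : i + 1 = m := by omega
        subst h
        right
        rw [← hgetm]
        exact getElem_idx_congr this _
    · exact Or.inl (h ▸ (hmemA0_iff (i-1) (by omega)).mpr (by omega))
  -- S2' : non-leaf property of interior vertices
  have hS2 : ∀ x ∈ A0, x ≠ v → (T.neighborSet x).ncard = 2 := by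
    intro x hx hxv
    obtain ⟨i, hi, rfl⟩ := hfindidx x hx
    rcases Nat.eq_zero_or_pos i with h0 | h0
    · subst h0
      exact absurd hget0 hxv
    · exact hC2 i hi h0
  set alast : V := A0.getLast hA0ne with halastdef
  have halastget : alast = l[m-1]'(by omega) := by
    rw [halastdef, List.getLast_eq_getElem]
    rw [List.getElem_of_eq hA0take (by omega)]
    rw [List.getElem_take]
  have halastA0 : alast ∈ A0 := List.getLast_mem hA0ne
  -- S3' : alast is adjacent to w
  have halastadj : T.Adj alast w := by
    rw [halastget, ← hgetm]
    have h := hadjget (m-1) (by omega)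
    have h2 : m - 1 + 1 = m := by omega
    rw [getElem_idx_congr h2.symm hmlen]
    exact h
  -- S3 : the only neighbor of w in A0 is alast
  have hS3 : ∀ x ∈ A0, T.Adj w x → x = alast := by
    intro x hx hadj
    rcases adj_consec hac p hp hwl (hA0l x hx) hadj with h | h
    · obtain ⟨i, hi1, hiw, hix⟩ := getElem_of_infix h
      have he1 : i = m := hidx i m (by omega) hmlen (by rw [hiw, hgetm])
      have he2 : i + 1 < m := (hmemA0_iff (i+1) hi1).mp (by rw [hix]; exact hx)
      omega
    · obtain ⟨i, hi1, hix, hiw⟩ := getElem_of_infix h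
      have him : i + 1 = m := hidx (i+1) m hi1 hmlen (by rw [hiw, hgetm])
      rw [halastget, ← hix]
      exact (getElem_idx_congr (by omega : m - 1 = i) (by omega)).symm
  -- the set A
  refine ⟨{x : V | x ∈ A0}, ⟨v, hvA0⟩, ?_, ?_, ?_, ?_⟩
  · -- A ≠ univ
    intro h
    have : w ∈ {x : V | x ∈ A0} := h.symm ▸ Set.mem_univ w
    exact hwA0 this
  · -- IsPathGraph
    have hA0nodup : A0.Nodup := (List.takeWhile_prefix c).sublist.nodup hln
    have hA0getl : ∀ i (hi : i < m), A0[i]'hi = l[i]'(by omega) := by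
      intro i hi
      rw [List.getElem_of_eq hA0take hi, List.getElem_take]
    refine ⟨A0.attach.map (fun x => ⟨x.1, x.2⟩), ?_, ?_, ?_⟩
    · refine List.Nodup.map ?_ (List.nodup_attach.mpr hA0nodup)
      rintro ⟨a, ha⟩ ⟨b, hb⟩ hab
      exact Subtype.ext (congrArg Subtype.val hab)
    · rintro ⟨a, ha⟩
      exact List.mem_map.mpr ⟨⟨a, ha⟩, List.mem_attach _ _, rfl⟩
    · have hl''len : (A0.attach.map (fun x => (⟨x.1, x.2⟩ : {y : V // y ∈ {x : V | x ∈ A0}}))).length = m := by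
        simp [hmdef]
      have hl''get : ∀ i (hi : i < m),
          ((A0.attach.map (fun x => (⟨x.1, x.2⟩ : {y : V // y ∈ {x : V | x ∈ A0}})))[i]'(by rw [hl''len]; omega)).1
            = l[i]'(by omega) := by
        intro i hi
        rw [← hA0getl i hi]
        simp
      intro x y
      constructor
      · intro hxy
        have hTxy : T.Adj x.1 y.1 := hxy
        have hxl : x.1 ∈ l := hA0l _ x.2
        have hyl : y.1 ∈ l := hA0l _ y.2
        rcases adj_consec hac p hp hxl hyl hTxy with h | h
        · left
          obtain ⟨i, hi1, hix, hiy⟩ := getElem_of_infix h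
          have hi1m : i + 1 < m := (hmemA0_iff (i+1) hi1).mp (by rw [hiy]; exact y.2)
          have e1 := Subtype.ext (p := fun z => z ∈ {x : V | x ∈ A0})
            ((hl''get i (by omega)).trans hix)
          have e2 := Subtype.ext (p := fun z => z ∈ {x : V | x ∈ A0})
            ((hl''get (i+1) hi1m).trans hiy)
          have hinf := infix_of_getElem
            (l := A0.attach.map (fun x => (⟨x.1, x.2⟩ : {y : V // y ∈ {x : V | x ∈ A0}})))
            (i := i) (by rw [hl''len]; omega)
          rw [e1, e2] at hinf
          exact hinf
        · right
          obtain ⟨i, hi1, hiy, hix⟩ := getElem_of_infix h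
          have hi1m : i + 1 < m := (hmemA0_iff (i+1) hi1).mp (by rw [hix]; exact x.2)
          have e1 := Subtype.ext (p := fun z => z ∈ {x : V | x ∈ A0})
            ((hl''get i (by omega)).trans hiy)
          have e2 := Subtype.ext (p := fun z => z ∈ {x : V | x ∈ A0})
            ((hl''get (i+1) hi1m).trans hix)
          have hinf := infix_of_getElem
            (l := A0.attach.map (fun x => (⟨x.1, x.2⟩ : {y : V // y ∈ {x : V | x ∈ A0}})))
            (i := i) (by rw [hl''len]; omega)
          rw [e1, e2] at hinf
          exact hinf
      · intro hxy
        have hA0inf : A0 <:+: l := (List.takeWhile_prefix c).isInfix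
        have hval : (A0.attach.map (fun x => (⟨x.1, x.2⟩ : {y : V // y ∈ {x : V | x ∈ A0}}))).map Subtype.val = A0 := by
          simp
        rcases hxy with h | h
        · have hmap := h.map (Subtype.val)
          rw [hval] at hmap
          exact chain'_of_infix hchain (hmap.trans hA0inf)
        · have hmap := h.map (Subtype.val)
          rw [hval] at hmap
          have : T.Adj y.1 x.1 := chain'_of_infix hchain (hmap.trans hA0inf)
          exact this.symm
  · -- IsTree of complement
    have hwc : w ∈ ({x : V | x ∈ A0}ᶜ : Set V) := hwA0
    constructor
    · -- connected
      rw [connected_iff]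
      refine ⟨?_, ⟨⟨w, hwc⟩⟩⟩
      intro x y
      obtain ⟨q0⟩ := hconn.preconnected x.1 y.1
      set q : T.Walk x.1 y.1 := (q0.toPath : T.Path x.1 y.1).1 with hqdef
      have hq : q.IsPath := (q0.toPath).2
      have hsub : ∀ z ∈ q.support, z ∈ ({x : V | x ∈ A0}ᶜ : Set V) := by
        by_contra hcon
        push_neg at hcon
        obtain ⟨z, hz, hzA⟩ := hcon
        have hzA0 : z ∈ A0 := not_not.mp hzA
        have hxA : x.1 ∉ A0 := x.2
        have hyA : y.1 ∉ A0 := y.2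
        -- w lies in the takeUntil part
        have hw1 : w ∈ (q.takeUntil z hz).support := by
          have hchain1 : (q.takeUntil z hz).support.Chain' T.Adj :=
            Walk.isChain_adj_support _
          have hhead1 : (q.takeUntil z hz).support.head (Walk.support_ne_nil _) = x.1 :=
            Walk.head_support _
          obtain ⟨u, u', hadj, hu, hu', hul, hu'l⟩ := crossing {x : V | x ∈ A0} T.Adj
            (q.takeUntil z hz).support hchain1 (Walk.support_ne_nil _)
            (by rw [hhead1]; exact hxA) z (Walk.end_mem_support _) hzA0
          have : u ∈ A0 ∨ u = w := hS1 u' hu' u hadj.symm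
          rcases this with h | h
          · exact absurd h hu
          · exact h ▸ hul
        -- w lies in the dropUntil part
        have hw2 : w ∈ (q.dropUntil z hz).support := by
          have hchain2 : (q.dropUntil z hz).support.reverse.Chain' (flip T.Adj) := by
            refine List.isChain_reverse.mpr ?_
            simpa [Function.flip_def] using (Walk.isChain_adj_support (q.dropUntil z hz))
          have hrevne : (q.dropUntil z hz).support.reverse ≠ [] := by
            simp
          have hhead2 : (q.dropUntil z hz).support.reverse.head hrevne = y.1 := by
            rw [List.head_reverse]
            exact Walk.getLast_support _
          obtain ⟨u, u', hadj, hu, hu', hul, hu'l⟩ := crossing {x : V | x ∈ A0} (flip T.Adj)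
            (q.dropUntil z hz).support.reverse hchain2 hrevne
            (by rw [hhead2]; exact hyA) z (by rw [List.mem_reverse]; exact Walk.start_mem_support _) hzA0
          have : u ∈ A0 ∨ u = w := hS1 u' hu' u hadj
          rcases this with h | h
          · exact absurd h hu
          · rw [← h]
            exact List.mem_reverse.mp hul
        -- contradiction with nodup
        have hqsupp : q.support = (q.takeUntil z hz).support ++ (q.dropUntil z hz).support.tail := by
          conv_lhs => rw [← q.take_spec hz]
          rw [Walk.support_append]
        have hnd : q.support.Nodup := hq.support_nodup
        rw [hqsupp] at hnd
        have hdisj := List.disjoint_of_nodup_append hnd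
        have hwz : w ≠ z := fun h => hwA0 (h ▸ hzA0)
        have hw2' : w ∈ (q.dropUntil z hz).support.tail := by
          have hcons : (q.dropUntil z hz).support = z :: (q.dropUntil z hz).support.tail :=
            Walk.support_eq_cons _
          rcases List.mem_cons.mp (hcons ▸ hw2) with h | h
          · exact absurd h hwz
          · exact h
        exact hdisj hw1 hw2'
      have hreach := reach_induce q hsub
      exact hreach
    · exact acyclic_induce hac _
  · -- leaf count
    have hcard : ∀ a : ↥({x : V | x ∈ A0}ᶜ),
        ((T.induce ({x : V | x ∈ A0}ᶜ)).neighborSet a).ncard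
        = (T.neighborSet a.1 ∩ ({x : V | x ∈ A0}ᶜ)).ncard := by
      intro a
      have himg : Subtype.val '' ((T.induce ({x : V | x ∈ A0}ᶜ)).neighborSet a)
          = T.neighborSet a.1 ∩ ({x : V | x ∈ A0}ᶜ) := by
        ext y
        constructor
        · rintro ⟨c, hc, rfl⟩
          exact ⟨hc, c.2⟩
        · rintro ⟨hadj, hyc⟩
          exact ⟨⟨y, hyc⟩, hadj, rfl⟩
      rw [← himg, Set.ncard_image_of_injective _ Subtype.val_injective]
    have hnotw : ∀ a : V, a ∉ A0 → a ≠ w →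
        T.neighborSet a ∩ ({x : V | x ∈ A0}ᶜ) = T.neighborSet a := by
      intro a ha haw
      apply Set.inter_eq_self_of_subset_left
      intro y hy
      simp only [Set.mem_compl_iff, Set.mem_setOf_eq]
      intro hyA0
      rcases hS1 y hyA0 a hy.symm with h | h
      · exact ha h
      · exact haw h
    have hwinter : T.neighborSet w ∩ ({x : V | x ∈ A0}ᶜ) = T.neighborSet w \ {alast} := by
      ext y
      simp only [Set.mem_inter_iff, Set.mem_compl_iff, Set.mem_setOf_eq, Set.mem_diff,
        Set.mem_singleton_iff, SimpleGraph.mem_neighborSet]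
      constructor
      · rintro ⟨h1, h2⟩
        exact ⟨h1, fun he => h2 (he ▸ halastA0)⟩
      · rintro ⟨h1, h2⟩
        exact ⟨h1, fun hyA0 => h2 (hS3 y hyA0 h1)⟩
    have hwmem : alast ∈ T.neighborSet w := halastadj.symm
    have hwcard : (T.neighborSet w \ {alast}).ncard = (T.neighborSet w).ncard - 1 :=
      Set.ncard_diff_singleton_of_mem hwmem
    have hLH : {a : ↥({x : V | x ∈ A0}ᶜ) |
          ((T.induce ({x : V | x ∈ A0}ᶜ)).neighborSet a).ncard = 1}
        = {a : ↥({x : V | x ∈ A0}ᶜ) | (T.neighborSet a.1).ncard = 1} := by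
      ext a
      simp only [Set.mem_setOf_eq]
      rw [hcard a]
      by_cases haw : a.1 = w
      · rw [haw, hwinter, hwcard]
        constructor
        · intro h; omega
        · intro h; omega
      · rw [hnotw a.1 a.2 haw]
    have himg2 : Subtype.val '' {a : ↥({x : V | x ∈ A0}ᶜ) | (T.neighborSet a.1).ncard = 1}
        = {u : V | (T.neighborSet u).ncard = 1} \ {x : V | x ∈ A0} := by
      ext u
      constructor
      · rintro ⟨a, ha, rfl⟩
        exact ⟨ha, a.2⟩
      · rintro ⟨h1, h2⟩
        exact ⟨⟨u, h2⟩, h1, rfl⟩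
    have hsetdiff : {u : V | (T.neighborSet u).ncard = 1} \ {x : V | x ∈ A0}
        = {u : V | (T.neighborSet u).ncard = 1} \ {v} := by
      ext u
      simp only [Set.mem_diff, Set.mem_setOf_eq, Set.mem_singleton_iff]
      constructor
      · rintro ⟨h1, h2⟩
        exact ⟨h1, fun he => h2 (he ▸ hvA0)⟩
      · rintro ⟨h1, h2⟩
        refine ⟨h1, fun hu => ?_⟩
        have := hS2 u hu h2
        omega
    have hleafn : {u : V | (T.neighborSet u).ncard = 1}.ncard = k := hleaf
    calc leafCount (T.induce ({x : V | x ∈ A0}ᶜ))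
        = ({a : ↥({x : V | x ∈ A0}ᶜ) |
            ((T.induce ({x : V | x ∈ A0}ᶜ)).neighborSet a).ncard = 1}).ncard := rfl
      _ = ({a : ↥({x : V | x ∈ A0}ᶜ) | (T.neighborSet a.1).ncard = 1}).ncard := by rw [hLH]
      _ = (Subtype.val '' {a : ↥({x : V | x ∈ A0}ᶜ) | (T.neighborSet a.1).ncard = 1}).ncard :=
          (Set.ncard_image_of_injective _ Subtype.val_injective).symm
      _ = ({u : V | (T.neighborSet u).ncard = 1} \ {x : V | x ∈ A0}).ncard := by rw [himg2]
      _ = ({u : V | (T.neighborSet u).ncard = 1} \ {v}).ncard := by rw [hsetdiff]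
      _ = k - 1 := by
          rw [Set.ncard_diff_singleton_of_mem hvL, hleafn]
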